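/- Let p₀ and p be polynomials over ℂ, α ∈ ℂ, with p₀.eval α ≠ 0, p ≠ 0, and let K = rootMultiplicity α p with K ≥ 1. Then p₀·p' − p₀'·p ≠ 0 and rootMultiplicity α (p₀·p' − p₀'·p) = K − 1. -/
import Mathlib


open Polynomial

/-- Key computation in the proof of Lemma 3.3: if `p₀(α) ≠ 0`, `p ≠ 0` and `α` is a root
of `p` of multiplicity exactly `K ≥ 1`, then `p₀ p' - p₀' p` is nonzero and has `α` as a
root of multiplicity exactly `K - 1`. -/
theorem rootMultiplicity_wronskian (p₀ p : Polynomial ℂ) (α : ℂ)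
    (hp₀ : p₀.eval α ≠ 0) (hp : p ≠ 0)
    (K : ℕ) (hKdef : K = rootMultiplicity α p) (hK : 1 ≤ K) :
    p₀ * derivative p - derivative p₀ * p ≠ 0 ∧
    rootMultiplicity α (p₀ * derivative p - derivative p₀ * p) = K - 1 := by
  set q : Polynomial ℂ := p /ₘ (X - C α) ^ K with hq
  have hqα : q.eval α ≠ 0 := by
    rw [hq, hKdef]; exact eval_divByMonic_pow_rootMultiplicity_ne_zero α hp
  have hpeq : (X - C α) ^ K * q = p := by
    rw [hq, hKdef]; exact pow_mul_divByMonic_rootMultiplicity_eq p α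
  set g : Polynomial ℂ := (K : Polynomial ℂ) * (p₀ * q) +
      (X - C α) * (p₀ * derivative q - derivative p₀ * q) with hg
  have hgα : g.eval α ≠ 0 := by
    simp only [hg, eval_add, eval_mul, eval_sub, eval_X, eval_C, sub_self, zero_mul, add_zero,
      eval_natCast]
    exact mul_ne_zero (Nat.cast_ne_zero.mpr (by omega)) (mul_ne_zero hp₀ hqα)
  have hgne : g ≠ 0 := fun h => hgα (by rw [h, eval_zero])
  have hfac : p₀ * derivative p - derivative p₀ * p = (X - C α) ^ (K - 1) * g := by
    rw [← hpeq, derivative_mul, derivative_pow, hg]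
    have h1 : (X - C α) ^ K = (X - C α) ^ (K - 1) * (X - C α) := by
      rw [← pow_succ]; congr 1; omega
    rw [h1]
    simp only [derivative_sub, derivative_X, derivative_C, sub_zero, mul_one, C_eq_natCast]
    ring
  constructor
  · rw [hfac]
    exact mul_ne_zero (pow_ne_zero _ (X_sub_C_ne_zero α)) hgne
  · rw [hfac, rootMultiplicity_mul (mul_ne_zero (pow_ne_zero _ (X_sub_C_ne_zero α)) hgne),
      rootMultiplicity_X_sub_C_pow, rootMultiplicity_eq_zero (fun h => hgα h), add_zero]
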